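/- Fix an integer d ≥ 2. There exists a constant B with 0 < B ≤ 1 (depending only on d) such that for all (c,a) ∈ ℂ^{d-1}: max{ |P_{c,a}(0)|, |P_{c,a}(c_1)|, …, |P_{c,a}(c_{d-2})| } ≥ B · max{|c|, |a|}^d. (Note that P_{c,a}(0) = a^d.) -/

import Mathlib

/-- The critically marked polynomial
`P_{c,a}(z) = (1/d) z^d + ∑_{j=2}^{d-1} (-1)^{d-j} σ_{d-j}(c) z^j / j + a^d`,
whose critical points are `0, c_1, …, c_{d-2}` and with `P_{c,a}(0) = a^d`. -/
noncomputable def polyCA (d : ℕ) (c : Fin (d - 2) → ℂ) (a : ℂ) (z : ℂ) : ℂ :=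
  (d : ℂ)⁻¹ * z ^ d +
    (∑ j ∈ Finset.Icc 2 (d - 1),
      (-1 : ℂ) ^ (d - j) *
        (∑ s ∈ Finset.powersetCard (d - j) (Finset.univ : Finset (Fin (d - 2))),
          ∏ i ∈ s, c i) * z ^ j / (j : ℂ)) +
    a ^ d

namespace Stmt11Aux

open Polynomial Finset

/-- elementary symmetric polynomial of the `c i` -/
noncomputable def sig (d : ℕ) (c : Fin (d - 2) → ℂ) (k : ℕ) : ℂ :=
  ∑ s ∈ Finset.powersetCard k (Finset.univ : Finset (Fin (d - 2))), ∏ i ∈ s, c i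

/-- `polyCA` as a polynomial. -/
noncomputable def pCA (d : ℕ) (c : Fin (d - 2) → ℂ) (a : ℂ) : Polynomial ℂ :=
  C (d : ℂ)⁻¹ * X ^ d +
    (∑ j ∈ Finset.Icc 2 (d - 1), C ((-1 : ℂ) ^ (d - j) * sig d c (d - j) / j) * X ^ j) +
    C (a ^ d)

lemma eval_pCA (d : ℕ) (c : Fin (d - 2) → ℂ) (a z : ℂ) :
    (pCA d c a).eval z = polyCA d c a z := by
  unfold pCA polyCA sig
  simp only [eval_add, eval_mul, eval_pow, eval_C, eval_X, eval_finset_sum]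
  congr 1
  congr 1
  refine Finset.sum_congr rfl fun j _ => ?_
  ring

lemma polyCA_at_zero (d : ℕ) (hd : 2 ≤ d) (c : Fin (d - 2) → ℂ) (a : ℂ) :
    polyCA d c a 0 = a ^ d := by
  unfold polyCA
  rw [zero_pow (by omega), Finset.sum_eq_zero, mul_zero, zero_add, zero_add]
  intro j hj
  rw [Finset.mem_Icc] at hj
  rw [zero_pow (by omega)]
  ring

lemma deriv_pCA (d : ℕ) (hd : 2 ≤ d) (c : Fin (d - 2) → ℂ) (a : ℂ) :
    derivative (pCA d c a) = X * ∏ i, (X - C (c i)) := by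
  have hd0 : (d : ℂ) ≠ 0 := Nat.cast_ne_zero.mpr (by omega)
  have hprod : (∏ i : Fin (d - 2), (X - C (c i))) =
      ∑ j ∈ Finset.range (d - 1), C ((-1 : ℂ) ^ j * sig d c j) * X ^ (d - 2 - j) := by
    have h1 : (∏ i : Fin (d - 2), (X - C (c i)))
        = ((((Finset.univ : Finset (Fin (d-2))).val.map c).map Neg.neg).map
            fun r => X + C r).prod := by
      rw [Multiset.map_map, Multiset.map_map, Finset.prod_eq_multiset_prod]
      apply congrArg
      apply Multiset.map_congr rfl
      intro i _
      simp [sub_eq_add_neg]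
    rw [h1, Multiset.prod_X_add_C_eq_sum_esymm]
    have hcard : Multiset.card ((((Finset.univ : Finset (Fin (d-2))).val.map c).map Neg.neg))
        = d - 2 := by simp
    rw [hcard, show d - 2 + 1 = d - 1 from by omega]
    refine Finset.sum_congr rfl fun j hj => ?_
    rw [Multiset.esymm_neg, Finset.esymm_map_val]
    rfl
  have hder : derivative (pCA d c a) =
      X ^ (d - 1) + ∑ j ∈ Finset.Icc 2 (d - 1),
        C ((-1 : ℂ) ^ (d - j) * sig d c (d - j)) * X ^ (j - 1) := by
    unfold pCA
    rw [derivative_add, derivative_add, derivative_C, add_zero, derivative_sum]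
    simp only [derivative_C_mul_X_pow]
    congr 1
    · rw [inv_mul_cancel₀ hd0]
      simp
    · refine Finset.sum_congr rfl fun j hj => ?_
      rw [Finset.mem_Icc] at hj
      have hj0 : ((j : ℂ)) ≠ 0 := Nat.cast_ne_zero.mpr (by omega)
      congr 2
      field_simp
  rw [hder, hprod, Finset.mul_sum]
  have hsplit : Finset.range (d - 1) = insert 0 (Finset.Icc 1 (d - 2)) := by
    ext x; simp [Finset.mem_Icc]; omega
  rw [hsplit, Finset.sum_insert (by simp)]
  have hzero : X * (C ((-1 : ℂ) ^ 0 * sig d c 0) * X ^ (d - 2 - 0)) = X ^ (d - 1) := by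
    have : sig d c 0 = 1 := by simp [sig]
    rw [this]
    simp only [pow_zero, one_mul, Nat.sub_zero, map_one, one_mul]
    rw [← pow_succ']
    congr 1
    omega
  rw [hzero]
  congr 1
  refine Finset.sum_nbij' (fun j => d - j) (fun j => d - j) ?_ ?_ ?_ ?_ ?_
  · intro a ha; simp [Finset.mem_Icc] at *; omega
  · intro a ha; simp [Finset.mem_Icc] at *; omega
  · intro a ha; simp [Finset.mem_Icc] at *; omega
  · intro a ha; simp [Finset.mem_Icc] at *; omega
  · intro j hj
    rw [Finset.mem_Icc] at hj
    rw [show d - 2 - (d - j) = j - 2 from by omega,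
        show j - 1 = j - 2 + 1 from by omega, pow_succ']
    ring

lemma zero_of_critical (d : ℕ) (hd : 2 ≤ d) (c : Fin (d - 2) → ℂ) (a : ℂ)
    (h0 : (pCA d c a).eval 0 = 0) (hc : ∀ i, (pCA d c a).eval (c i) = 0) :
    ∀ i, c i = 0 := by
  set p := pCA d c a with hp
  have hq := deriv_pCA d hd c a
  have hmonicprod : (∏ i : Fin (d - 2), (X - C (c i))).Monic :=
    monic_prod_of_monic _ _ fun i _ => monic_X_sub_C _
  have hqmonic : (derivative p).Monic := by rw [hq]; exact monic_X.mul hmonicprod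
  have hqne : derivative p ≠ 0 := hqmonic.ne_zero
  have hpne : p ≠ 0 := by
    intro h
    rw [h, derivative_zero] at hqne
    exact hqne rfl
  have hdeg : p.natDegree ≤ d := by
    rw [hp]
    unfold pCA
    refine le_trans (natDegree_add_le _ _) ?_
    simp only [natDegree_C, max_le_iff]
    refine ⟨le_trans (natDegree_add_le _ _) ?_, by omega⟩
    simp only [max_le_iff]
    constructor
    · exact le_trans (natDegree_C_mul_X_pow_le _ _) le_rfl
    · refine Polynomial.natDegree_sum_le_of_forall_le _ _ fun j hj => ?_
      rw [Finset.mem_Icc] at hj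
      exact le_trans (natDegree_C_mul_X_pow_le _ _) (by omega)
  have hqroots : (derivative p).roots = 0 ::ₘ ((Finset.univ : Finset (Fin (d-2))).val.map c) := by
    rw [hq]
    have h1 : (∏ i : Fin (d - 2), (X - C (c i)))
        = (((Finset.univ : Finset (Fin (d-2))).val.map c).map fun r => X - C r).prod := by
      rw [Multiset.map_map, Finset.prod_eq_multiset_prod]
      rfl
    rw [roots_mul (mul_ne_zero X_ne_zero hmonicprod.ne_zero), roots_X, h1,
      roots_multiset_prod_X_sub_C, Multiset.singleton_add]
  have hqcard : Multiset.card (derivative p).roots = d - 1 := by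
    rw [hqroots]
    simp
    omega
  have hpcard : Multiset.card p.roots = p.natDegree :=
    (Polynomial.splits_iff_card_roots).mp (IsAlgClosed.splits p)
  have hrootp : ∀ r ∈ (derivative p).roots, p.IsRoot r := by
    intro r hr
    rw [hqroots, Multiset.mem_cons] at hr
    rcases hr with h | h
    · rwa [h]
    · rw [Multiset.mem_map] at h
      obtain ⟨i, _, rfl⟩ := h
      exact hc i
  set T' := (derivative p).roots.toFinset with hT'
  set T := p.roots.toFinset with hT
  have hsub : T' ⊆ T := by
    intro r hr
    rw [hT', Multiset.mem_toFinset] at hr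
    rw [hT, Multiset.mem_toFinset, mem_roots hpne]
    exact hrootp r hr
  have hcount : ∀ r ∈ T', (derivative p).roots.count r = p.roots.count r - 1 := by
    intro r hr
    rw [hT', Multiset.mem_toFinset] at hr
    rw [count_roots, count_roots,
      Polynomial.derivative_rootMultiplicity_of_root (hrootp r hr)]
  have hsum1 : d - 1 = ∑ r ∈ T', ((derivative p).roots.count r) := by
    rw [Multiset.toFinset_sum_count_eq, hqcard]
  have hsum2 : ∑ r ∈ T', ((derivative p).roots.count r)
      ≤ ∑ r ∈ T, (p.roots.count r - 1) := by
    rw [Finset.sum_congr rfl hcount]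
    exact Finset.sum_le_sum_of_subset hsub
  have hsum3 : ∑ r ∈ T, (p.roots.count r - 1) + T.card = ∑ r ∈ T, p.roots.count r := by
    rw [Finset.card_eq_sum_ones, ← Finset.sum_add_distrib]
    refine Finset.sum_congr rfl fun r hr => ?_
    have : 1 ≤ Multiset.count r p.roots :=
      Multiset.one_le_count_iff_mem.mpr (Multiset.mem_toFinset.mp hr)
    omega
  have hsum4 : ∑ r ∈ T, p.roots.count r = Multiset.card p.roots :=
    Multiset.toFinset_sum_count_eq _
  have hcardT : T.card ≤ 1 := by
    have := hpcard
    omega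
  have h0T : (0 : ℂ) ∈ T := by
    rw [hT, Multiset.mem_toFinset, mem_roots hpne]
    exact h0
  intro i
  have hciT : c i ∈ T := by
    rw [hT, Multiset.mem_toFinset, mem_roots hpne]
    exact hc i
  exact Finset.card_le_one.mp hcardT _ hciT _ h0T

lemma polyCA_smul (d : ℕ) (hd : 2 ≤ d) (t : ℂ) (c : Fin (d - 2) → ℂ) (a z : ℂ) :
    polyCA d (fun i => t * c i) (t * a) (t * z) = t ^ d * polyCA d c a z := by
  unfold polyCA
  rw [mul_pow t a, mul_pow t z, mul_add, mul_add, Finset.mul_sum]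
  congr 1
  congr 1
  · ring
  refine Finset.sum_congr rfl fun j hj => ?_
  simp only []
  rw [Finset.mem_Icc] at hj
  have hinner : (∑ s ∈ Finset.powersetCard (d - j) (Finset.univ : Finset (Fin (d - 2))),
      ∏ i ∈ s, (t * c i)) = t ^ (d - j) *
      ∑ s ∈ Finset.powersetCard (d - j) (Finset.univ : Finset (Fin (d - 2))), ∏ i ∈ s, c i := by
    rw [Finset.mul_sum]
    refine Finset.sum_congr rfl fun s hs => ?_
    rw [Finset.mem_powersetCard] at hs
    rw [Finset.prod_mul_distrib, Finset.prod_const, hs.2]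
  rw [hinner, mul_pow t z]
  have ht : t ^ (d - j) * t ^ j = t ^ d := by
    rw [← pow_add]
    congr 1
    omega
  linear_combination ((-1:ℂ)^(d-j) * (∑ s ∈ Finset.powersetCard (d - j)
    (Finset.univ : Finset (Fin (d - 2))), ∏ i ∈ s, c i) * z ^ j / (j:ℂ)) * ht

lemma iSup_abs_eq (n : ℕ) (c : Fin n → ℂ) : (⨆ i, ‖c i‖) = ‖c‖ := by
  rcases Nat.eq_zero_or_pos n with h | h
  · subst h
    have : c = 0 := Subsingleton.elim _ _
    subst this
    rw [Real.iSup_of_isEmpty]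
    simp [Pi.norm_def]
  · have : Nonempty (Fin n) := ⟨⟨0, h⟩⟩
    apply le_antisymm
    · refine ciSup_le fun i => ?_
      exact norm_le_pi_norm c i
    · have hnn : 0 ≤ ⨆ i, ‖c i‖ := by
        refine le_trans (norm_nonneg (c (Classical.arbitrary _)))
          (le_ciSup (f := fun i => ‖c i‖)
            (Set.Finite.bddAbove (Set.finite_range _)) _)
      rw [pi_norm_le_iff_of_nonneg hnn]
      intro i
      exact le_ciSup (f := fun i => ‖c i‖)
        (Set.Finite.bddAbove (Set.finite_range _)) i

lemma contPolyCA (d : ℕ) (v : Option (Fin (d - 2))) :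
    Continuous fun x : (Fin (d - 2) → ℂ) × ℂ =>
      ‖polyCA d x.1 x.2 (v.elim (0 : ℂ) x.1)‖ := by
  apply continuous_norm.comp
  have hz : Continuous fun x : (Fin (d - 2) → ℂ) × ℂ => v.elim (0 : ℂ) x.1 := by
    cases v
    · exact continuous_const
    · exact (continuous_apply _).comp continuous_fst
  unfold polyCA
  apply Continuous.add
  apply Continuous.add
  · exact continuous_const.mul (hz.pow d)
  · apply continuous_finset_sum
    intro j _
    apply Continuous.div_const
    apply Continuous.mul
    · apply Continuous.mul continuous_const
      apply continuous_finset_sum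
      intro s _
      apply continuous_finset_prod
      intro i _
      exact (continuous_apply i).comp continuous_fst
    · exact hz.pow j
  · exact (continuous_snd).pow d

/-- The max of `|polyCA|` over the critical points, as a function of `(c,a)`. -/
noncomputable def FF (d : ℕ) (x : (Fin (d - 2) → ℂ) × ℂ) : ℝ :=
  (Finset.univ : Finset (Option (Fin (d - 2)))).sup' Finset.univ_nonempty
    (fun v => ‖polyCA d x.1 x.2 (v.elim (0 : ℂ) x.1)‖)

lemma le_FF (d : ℕ) (x : (Fin (d - 2) → ℂ) × ℂ) (v : Option (Fin (d - 2))) :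
    ‖polyCA d x.1 x.2 (v.elim (0 : ℂ) x.1)‖ ≤ FF d x := by
  unfold FF
  apply Finset.le_sup' (fun v => ‖polyCA d x.1 x.2 (v.elim (0 : ℂ) x.1)‖)
    (Finset.mem_univ v)

lemma FF_nonneg (d : ℕ) (x : (Fin (d - 2) → ℂ) × ℂ) : 0 ≤ FF d x :=
  le_trans (norm_nonneg _) (le_FF d x none)

lemma FF_cont (d : ℕ) : Continuous (FF d) := by
  unfold FF
  apply Continuous.finset_sup'_apply Finset.univ_nonempty
  intro v _
  exact contPolyCA d v

lemma FF_pos (d : ℕ) (hd : 2 ≤ d) (x : (Fin (d - 2) → ℂ) × ℂ) (hx : ‖x‖ = 1) :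
    0 < FF d x := by
  rcases lt_or_eq_of_le (FF_nonneg d x) with h | h
  · exact h
  exfalso
  have hzero : ∀ v : Option (Fin (d - 2)), polyCA d x.1 x.2 (v.elim (0 : ℂ) x.1) = 0 := by
    intro v
    refine norm_eq_zero.mp ?_
    have h1 := le_FF d x v
    have h2 := norm_nonneg (polyCA d x.1 x.2 (v.elim (0 : ℂ) x.1))
    linarith [h ▸ h1]
  have h0 : polyCA d x.1 x.2 0 = 0 := hzero none
  have ha : x.2 = 0 := by
    have h2 := polyCA_at_zero d hd x.1 x.2
    rw [h0] at h2
    exact pow_eq_zero_iff (n := d) (by omega) |>.mp h2.symm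
  have hc : ∀ i, x.1 i = 0 := by
    apply zero_of_critical d hd x.1 x.2
    · rw [eval_pCA]; exact h0
    · intro i
      rw [eval_pCA]
      exact hzero (some i)
  have hx0 : x = 0 := by
    ext i
    · exact hc i
    · exact ha
  rw [hx0] at hx
  simp at hx

end Stmt11Aux

/-- There is a constant `0 < B ≤ 1`, depending only on `d`, such that the maximum of
`|P_{c,a}|` over the critical points `0, c_1, …, c_{d-2}` is at least
`B · max{|c|,|a|}^d`. -/
theorem stmt11 (d : ℕ) (hd : 2 ≤ d) :
    ∃ B : ℝ, 0 < B ∧ B ≤ 1 ∧ ∀ (c : Fin (d - 2) → ℂ) (a : ℂ),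
      B * max (⨆ i, ‖c i‖) ‖a‖ ^ d ≤
        (Finset.univ : Finset (Option (Fin (d - 2)))).sup' Finset.univ_nonempty
          (fun v => ‖polyCA d c a (v.elim (0 : ℂ) c)‖) := by
  classical
  open Stmt11Aux in
  have hsphne : (Metric.sphere (0 : (Fin (d - 2) → ℂ) × ℂ) 1).Nonempty := by
    refine ⟨((0 : Fin (d - 2) → ℂ), (1 : ℂ)), ?_⟩
    rw [Metric.mem_sphere, dist_zero_right, Prod.norm_def]
    simp
  obtain ⟨xm, hxm, hmin⟩ := (isCompact_sphere (0 : (Fin (d - 2) → ℂ) × ℂ) 1).exists_isMinOn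
    hsphne (Stmt11Aux.FF_cont d).continuousOn
  have hxm1 : ‖xm‖ = 1 := by
    rwa [Metric.mem_sphere, dist_zero_right] at hxm
  set B₀ := Stmt11Aux.FF d xm with hB₀
  have hB₀pos : 0 < B₀ := Stmt11Aux.FF_pos d hd xm hxm1
  refine ⟨min B₀ 1, by positivity, min_le_right _ _, ?_⟩
  intro c a
  have hgoal : min B₀ 1 * max (⨆ i, ‖c i‖) ‖a‖ ^ d
      ≤ Stmt11Aux.FF d (c, a) := by
    set M := max (⨆ i, ‖c i‖) ‖a‖ with hM
    have hMnorm : M = ‖((c, a) : (Fin (d - 2) → ℂ) × ℂ)‖ := by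
      rw [hM, Prod.norm_def, Stmt11Aux.iSup_abs_eq]
    rcases eq_or_lt_of_le (norm_nonneg ((c, a) : (Fin (d - 2) → ℂ) × ℂ)) with h0 | hpos
    · rw [hMnorm, ← h0, zero_pow (by omega : d ≠ 0), mul_zero]
      exact Stmt11Aux.FF_nonneg d (c, a)
    · set t : ℝ := M⁻¹ with hts
      have hMpos : 0 < M := hMnorm ▸ hpos
      have htpos : 0 < t := inv_pos.mpr hMpos
      set u : (Fin (d - 2) → ℂ) × ℂ := ((t : ℂ)) • ((c, a) : (Fin (d - 2) → ℂ) × ℂ) with hu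
      have hu1 : ‖u‖ = 1 := by
        rw [hu, norm_smul, Complex.norm_real, Real.norm_of_nonneg htpos.le, ← hMnorm, hts]
        field_simp
      have hmem : u ∈ Metric.sphere (0 : (Fin (d - 2) → ℂ) × ℂ) 1 := by
        rwa [Metric.mem_sphere, dist_zero_right]
      have hB₀le : B₀ ≤ Stmt11Aux.FF d u := isMinOn_iff.mp hmin u hmem
      have hu1' : u.1 = fun i => (t : ℂ) * c i := by
        rw [hu]; rfl
      have hu2' : u.2 = (t : ℂ) * a := by
        rw [hu]; rfl
      have hueq : ∀ v : Option (Fin (d - 2)),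
          ‖polyCA d u.1 u.2 (v.elim (0 : ℂ) u.1)‖
            = t ^ d * ‖polyCA d c a (v.elim (0 : ℂ) c)‖ := by
        intro v
        have hzv : (v.elim (0 : ℂ) u.1) = (t : ℂ) * (v.elim (0 : ℂ) c) := by
          cases v
          · simp
          · simp [hu1']
        rw [hzv, hu1', hu2', Stmt11Aux.polyCA_smul d hd]
        rw [norm_mul, norm_pow, Complex.norm_real, Real.norm_of_nonneg htpos.le]
      obtain ⟨v₀, _, hv₀⟩ := Finset.exists_mem_eq_sup'
        (Finset.univ_nonempty : (Finset.univ : Finset (Option (Fin (d - 2)))).Nonempty)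
        (fun v => ‖polyCA d u.1 u.2 (v.elim (0 : ℂ) u.1)‖)
      have hFu : Stmt11Aux.FF d u = t ^ d * ‖polyCA d c a (v₀.elim (0 : ℂ) c)‖ := by
        rw [← hueq v₀]
        exact hv₀
      have htM : t ^ d * M ^ d = 1 := by
        rw [← mul_pow, hts]
        field_simp
        exact one_pow d
      have h2 : min B₀ 1 ≤ t ^ d * ‖polyCA d c a (v₀.elim (0 : ℂ) c)‖ :=
        le_trans (min_le_left _ _) (hFu ▸ hB₀le)
      have hkey : min B₀ 1 * M ^ d ≤ ‖polyCA d c a (v₀.elim (0 : ℂ) c)‖ := by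
        calc min B₀ 1 * M ^ d
            ≤ (t ^ d * ‖polyCA d c a (v₀.elim (0 : ℂ) c)‖) * M ^ d :=
              mul_le_mul_of_nonneg_right h2 (by positivity)
          _ = ‖polyCA d c a (v₀.elim (0 : ℂ) c)‖ * (t ^ d * M ^ d) := by ring
          _ = ‖polyCA d c a (v₀.elim (0 : ℂ) c)‖ := by rw [htM, mul_one]
      exact le_trans hkey (Stmt11Aux.le_FF d (c, a) v₀)
  exact hgoal
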